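/- arXiv:1502.02379 — 2 statements merged into one kernel-verified Lean document; each statement's English description precedes it below -/
import Mathlib

section
/- For every continuous function f on [-1,1], the limit as a → 0+ of c_a ∫_{-1}^{1} f(t) (1-t^2)^{a-1} dt equals (f(1) + f(-1))/2, where c_a = Γ(a + 1/2) / (√π Γ(a)). -/
open Real MeasureTheory Set

/-- Pochhammer symbol `(a)_n = a (a+1) ⋯ (a+n-1)`. -/
noncomputable def poch (a : ℝ) (n : ℕ) : ℝ := ∏ i ∈ Finset.range n, (a + i)

/-- Jacobi polynomial `P_n^{(a,b)}(x)`, normalized by `P_n^{(a,b)}(1) = (a+1)_n / n!`. -/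
noncomputable def jacobiP (n : ℕ) (a b x : ℝ) : ℝ :=
  ∑ k ∈ Finset.range (n + 1),
    (poch (a + k + 1) (n - k) * poch (a + b + n + 1) k) /
      ((Nat.factorial k : ℝ) * (Nat.factorial (n - k) : ℝ)) * ((x - 1) / 2) ^ k

/-- Gegenbauer polynomial `C_n^{λ}(x)`. -/
noncomputable def gegenbauerC (n : ℕ) (l x : ℝ) : ℝ :=
  ∑ k ∈ Finset.range (n / 2 + 1),
    (-1 : ℝ) ^ k * poch l (n - k) /
      ((Nat.factorial k : ℝ) * (Nat.factorial (n - 2 * k) : ℝ)) * (2 * x) ^ (n - 2 * k)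

/-- `Z_n^λ(x) = ((n+λ)/λ) C_n^λ(x)`, extended analytically in `λ` through `λ = 0`. -/
noncomputable def gegenbauerZ (n : ℕ) (l x : ℝ) : ℝ :=
  if n = 0 then 1 else
  ∑ k ∈ Finset.range (n / 2 + 1),
    (-1 : ℝ) ^ k * ((n : ℝ) + l) * poch (l + 1) (n - k - 1) /
      ((Nat.factorial k : ℝ) * (Nat.factorial (n - 2 * k) : ℝ)) * (2 * x) ^ (n - 2 * k)


open intervalIntegral

lemma meas_w (a : ℝ) : Measurable (fun t : ℝ => (1 - t^2) ^ (a-1)) := by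
  measurability


lemma integrable_w_right {a : ℝ} (ha : 0 < a) (ha1 : a < 1) :
    IntervalIntegrable (fun t : ℝ => (1 - t^2) ^ (a-1)) volume 0 1 := by
  have hbase : IntervalIntegrable (fun t : ℝ => (1 - t) ^ (a-1)) volume 0 1 := by
    have := ((intervalIntegrable_rpow' (a := 0) (b := 1) (r := a - 1)
      (by linarith)).comp_sub_left 1).symm
    simpa using this
  refine hbase.mono_fun (meas_w a).aestronglyMeasurable.restrict ?_
  filter_upwards [MeasureTheory.ae_restrict_mem measurableSet_uIoc] with t ht
  rw [Set.uIoc_of_le (by norm_num : (0:ℝ) ≤ 1)] at ht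
  obtain ⟨ht0, ht1⟩ := ht
  have hn1 : (0:ℝ) ≤ 1 - t^2 := by nlinarith
  rw [Real.norm_eq_abs, abs_of_nonneg (Real.rpow_nonneg hn1 _),
    Real.norm_eq_abs, abs_of_nonneg (Real.rpow_nonneg (by linarith) _)]
  rcases eq_or_lt_of_le ht1 with h1 | h1
  · subst h1; norm_num
  · have h2 : (0:ℝ) < 1 - t := by linarith
    exact Real.rpow_le_rpow_of_nonpos h2 (by nlinarith) (by linarith)

lemma beta_real {a b : ℝ} (ha : 0 < a) (hb : 0 < b) :
    Real.Gamma a * Real.Gamma b =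
      Real.Gamma (a + b) * ∫ x in (0:ℝ)..1, x^(a-1) * (1-x)^(b-1) := by
  have key := Complex.Gamma_mul_Gamma_eq_betaIntegral (s := (a:ℂ)) (t := (b:ℂ))
    (by simpa using ha) (by simpa using hb)
  have hbeta : Complex.betaIntegral (a:ℂ) (b:ℂ) =
      ((∫ x in (0:ℝ)..1, x^(a-1) * (1-x)^(b-1) : ℝ) : ℂ) := by
    rw [Complex.betaIntegral, ← intervalIntegral.integral_ofReal]
    apply intervalIntegral.integral_congr
    intro x hx
    rw [Set.uIcc_of_le (by norm_num : (0:ℝ) ≤ 1)] at hx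
    push_cast
    rw [Complex.ofReal_cpow hx.1, Complex.ofReal_cpow (by linarith [hx.2] : (0:ℝ) ≤ 1 - x)]
    push_cast
    ring
  rw [hbeta, ← Complex.ofReal_add, Complex.Gamma_ofReal, Complex.Gamma_ofReal,
    Complex.Gamma_ofReal, ← Complex.ofReal_mul, ← Complex.ofReal_mul] at key
  exact_mod_cast key

lemma sqrtpi_pos : 0 < Real.sqrt π := Real.sqrt_pos.mpr Real.pi_pos

lemma total_integral {a : ℝ} (ha : 0 < a) (ha1 : a < 1) :
    ∫ t in (-1:ℝ)..1, (1 - t^2)^(a-1) = Real.sqrt π * Real.Gamma a / Real.Gamma (a + 1/2) := by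
  have hsub := intervalIntegral.integral_comp_mul_add
    (f := fun t : ℝ => (1 - t^2)^(a-1)) (a := 0) (b := 1) (c := 2) (hc := two_ne_zero) (-1)
  norm_num at hsub
  have heq : ∫ x in (0:ℝ)..1, (1 - (2*x + -1)^2)^(a-1)
      = (4:ℝ)^(a-1) * ∫ x in (0:ℝ)..1, x^(a-1) * (1-x)^(a-1) := by
    rw [← intervalIntegral.integral_const_mul]
    apply intervalIntegral.integral_congr
    intro x hx
    rw [Set.uIcc_of_le (by norm_num : (0:ℝ) ≤ 1)] at hx
    have h1 : 1 - (2*x + -1)^2 = (4*x) * (1-x) := by ring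
    dsimp only
    rw [h1, Real.mul_rpow (by linarith [hx.1]) (by linarith [hx.2]),
      Real.mul_rpow (by norm_num) hx.1]
    ring
  have hbeta := beta_real ha ha
  have hdup := Real.Gamma_mul_Gamma_add_half a
  have hG2a : Real.Gamma (2*a) ≠ 0 := (Real.Gamma_pos_of_pos (by linarith)).ne'
  have hGa : Real.Gamma a ≠ 0 := (Real.Gamma_pos_of_pos ha).ne'
  have hGah : Real.Gamma (a + 1/2) ≠ 0 := (Real.Gamma_pos_of_pos (by linarith)).ne'
  have hB : ∫ x in (0:ℝ)..1, x^(a-1) * (1-x)^(a-1)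
      = Real.Gamma a * Real.Gamma a / Real.Gamma (2*a) := by
    rw [eq_div_iff hG2a]
    rw [show a + a = 2*a from by ring] at hbeta
    linarith [hbeta]
  have hI : (∫ t in (-1:ℝ)..1, (1 - t^2)^(a-1))
      = 2 * ((4:ℝ)^(a-1) * (Real.Gamma a * Real.Gamma a / Real.Gamma (2*a))) := by
    rw [← hB, ← heq, hsub]
    ring
  have hpow : (2:ℝ)^(1-2*a) * (2:ℝ)^(2*a-1) = 1 := by
    rw [← Real.rpow_add two_pos]; norm_num
  have h24 : (2:ℝ)^(2:ℝ) = 4 := by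
    have := Real.rpow_natCast (2:ℝ) 2
    norm_num at this
    linarith
  have hpow2 : 2 * (4:ℝ)^(a-1) = (2:ℝ)^(2*a-1) := by
    rw [← h24, ← Real.rpow_mul (by norm_num)]
    nth_rewrite 1 [show (2:ℝ) = (2:ℝ)^(1:ℝ) from (Real.rpow_one 2).symm]
    rw [← Real.rpow_add two_pos]
    ring_nf
  rw [hI]
  field_simp
  rw [show (2*a+1)/2 = a + 1/2 from by ring]
  linear_combination (Real.Gamma a * Real.Gamma (a+1/2)) * hpow2
    + ((2:ℝ)^(2*a-1)) * hdup
    + (Real.Gamma (2*a) * Real.sqrt π) * hpow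

lemma integrable_w {a : ℝ} (ha : 0 < a) (ha1 : a < 1) :
    IntervalIntegrable (fun t : ℝ => (1 - t^2) ^ (a-1)) volume (-1) 1 := by
  have hleft : IntervalIntegrable (fun t : ℝ => (1 - t^2) ^ (a-1)) volume (-1) 0 := by
    have h := ((IntervalIntegrable.iff_comp_neg (f := fun t : ℝ => (1 - t^2) ^ (a-1)) (a := 0) (b := 1) (by simp)).mp (integrable_w_right ha ha1))
    have h2 : (fun x : ℝ => (1 - (-x)^2) ^ (a-1)) = (fun x : ℝ => (1 - x^2) ^ (a-1)) := by
      funext x; rw [neg_pow]; norm_num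
    rw [h2] at h
    simpa using h.symm
  exact hleft.trans (integrable_w_right ha ha1)

lemma integrable_w_sub {a c d : ℝ} (ha : 0 < a) (ha1 : a < 1)
    (h1 : (-1:ℝ) ≤ c) (h3 : d ≤ 1) (hc : c ≤ 1) (hd : (-1:ℝ) ≤ d) :
    IntervalIntegrable (fun t : ℝ => (1 - t^2) ^ (a-1)) volume c d :=
  (integrable_w ha ha1).mono_set
    (Set.uIcc_subset_uIcc (by rw [Set.uIcc_of_le (by norm_num : (-1:ℝ) ≤ 1)]; exact ⟨h1, hc⟩)
      (by rw [Set.uIcc_of_le (by norm_num : (-1:ℝ) ≤ 1)]; exact ⟨hd, h3⟩))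

lemma integrable_Fw {a c d : ℝ} (ha : 0 < a) (ha1 : a < 1) {F : ℝ → ℝ} (hF : Continuous F)
    (h1 : (-1:ℝ) ≤ c) (h3 : d ≤ 1) (hc : c ≤ 1) (hd : (-1:ℝ) ≤ d) :
    IntervalIntegrable (fun t : ℝ => F t * (1 - t^2) ^ (a-1)) volume c d :=
  (integrable_w_sub ha ha1 h1 h3 hc hd).continuousOn_mul hF.continuousOn

lemma key_bound {a : ℝ} (ha : 0 < a) (ha1 : a < 1) {F : ℝ → ℝ} (hF : Continuous F)
    {c d v ε' : ℝ} (h1 : (-1:ℝ) ≤ c) (h2 : c ≤ d) (h3 : d ≤ 1)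
    (hv : ∀ t ∈ Icc c d, |F t - v| ≤ ε') :
    |(∫ t in c..d, F t * (1-t^2)^(a-1)) - v * ∫ t in c..d, (1-t^2)^(a-1)|
      ≤ ε' * ∫ t in c..d, (1-t^2)^(a-1) := by
  have hiw := integrable_w_sub ha ha1 h1 h3 (le_trans h2 h3) (le_trans h1 h2)
  have hiF := integrable_Fw ha ha1 hF h1 h3 (le_trans h2 h3) (le_trans h1 h2)
  have hdiff : (∫ t in c..d, F t * (1-t^2)^(a-1)) - v * ∫ t in c..d, (1-t^2)^(a-1)
      = ∫ t in c..d, (F t - v) * (1-t^2)^(a-1) := by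
    rw [← intervalIntegral.integral_const_mul, ← intervalIntegral.integral_sub hiF (hiw.const_mul v)]
    congr 1; funext t; ring
  rw [hdiff]
  have hb := intervalIntegral.norm_integral_le_abs_of_norm_le
    (f := fun t => (F t - v) * (1-t^2)^(a-1)) (g := fun t => ε' * (1-t^2)^(a-1))
    (μ := volume) (a := c) (b := d) ?_ (hiw.const_mul ε')
  · rw [intervalIntegral.integral_const_mul] at hb
    have hJ : 0 ≤ ∫ t in c..d, (1-t^2)^(a-1) := by
      apply intervalIntegral.integral_nonneg h2
      intro t ht
      exact Real.rpow_nonneg (by nlinarith [ht.1, ht.2]) _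
    calc |∫ t in c..d, (F t - v) * (1-t^2)^(a-1)| ≤ |ε' * ∫ t in c..d, (1-t^2)^(a-1)| := hb
    _ = ε' * ∫ t in c..d, (1-t^2)^(a-1) := by
        rcases hv c ⟨le_refl c, h2⟩ with h
        have hε' : 0 ≤ ε' := le_trans (abs_nonneg _) h
        rw [abs_of_nonneg (mul_nonneg hε' hJ)]
  · filter_upwards [MeasureTheory.ae_restrict_mem measurableSet_uIoc] with t ht
    rw [Set.uIoc_of_le h2] at ht
    have ht' : t ∈ Icc c d := ⟨le_of_lt ht.1, ht.2⟩
    have hw0 : 0 ≤ (1-t^2)^(a-1) :=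
      Real.rpow_nonneg (by nlinarith [le_trans h1 ht'.1, le_trans ht'.2 h3]) _
    rw [Real.norm_eq_abs, abs_mul, abs_of_nonneg hw0]
    exact mul_le_mul_of_nonneg_right (hv t ht') hw0

lemma J_symm (a δ : ℝ) :
    (∫ t in (1-δ)..1, (1 - t^2)^(a-1)) = ∫ t in (-1:ℝ)..(-1+δ), (1 - t^2)^(a-1) := by
  have h := intervalIntegral.integral_comp_neg (f := fun t : ℝ => (1 - t^2)^(a-1))
    (a := 1-δ) (b := 1)
  have h2 : (fun x : ℝ => (1 - (-x)^2) ^ (a-1)) = (fun x : ℝ => (1 - x^2) ^ (a-1)) := by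
    funext x; rw [neg_pow]; norm_num
  rw [h2] at h
  rw [h, show -(1-δ) = -1 + δ from by ring]

lemma gamma_ne_neg_nat {s : ℝ} (hs : 0 < s) : ∀ m : ℕ, s ≠ -(m:ℝ) := by
  intro m h
  have : (0:ℝ) ≤ m := Nat.cast_nonneg m
  linarith [h ▸ hs]

lemma tendsto_c :
    Filter.Tendsto (fun a : ℝ => Real.Gamma (a + 1/2) / (Real.sqrt π * Real.Gamma a))
      (nhdsWithin 0 (Ioi 0)) (nhds 0) := by
  have hg : Filter.Tendsto (fun a : ℝ => a * Real.Gamma (a + 1/2) / (Real.sqrt π * Real.Gamma (a+1)))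
      (nhdsWithin 0 (Ioi 0)) (nhds 0) := by
    have hc1 : ContinuousAt (fun a : ℝ => Real.Gamma (a + 1/2)) 0 := by
      exact ((Real.differentiableAt_Gamma (gamma_ne_neg_nat (by norm_num))).continuousAt.comp
        ((continuous_id.add continuous_const).continuousAt (x := 0)))
    have hc2 : ContinuousAt (fun a : ℝ => Real.Gamma (a + 1)) 0 := by
      exact ((Real.differentiableAt_Gamma (gamma_ne_neg_nat (by norm_num))).continuousAt.comp
        ((continuous_id.add continuous_const).continuousAt (x := 0)))
    have hca : ContinuousAt (fun a : ℝ => a * Real.Gamma (a + 1/2) / (Real.sqrt π * Real.Gamma (a+1))) 0 := by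
      apply ContinuousAt.div
      · exact continuousAt_id.mul hc1
      · exact continuousAt_const.mul hc2
      · simp [Real.Gamma_one, sqrtpi_pos.ne']
    have := hca.tendsto.mono_left (nhdsWithin_le_nhds (s := Ioi 0))
    simpa [Real.Gamma_one] using this
  apply hg.congr'
  filter_upwards [self_mem_nhdsWithin] with a (ha : a ∈ Ioi 0)
  have ha' : a ≠ 0 := ne_of_gt ha
  rw [Real.Gamma_add_one ha',
    show Real.sqrt π * (a * Real.Gamma a) = a * (Real.sqrt π * Real.Gamma a) from by ring]
  exact mul_div_mul_left _ _ ha'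

set_option maxHeartbeats 1000000 in
theorem stmt0 (f : ℝ → ℝ) (hf : ContinuousOn f (Icc (-1 : ℝ) 1)) :
    Filter.Tendsto
      (fun a : ℝ => (Real.Gamma (a + 1/2) / (Real.sqrt π * Real.Gamma a)) *
        ∫ t in (-1 : ℝ)..1, f t * (1 - t ^ 2) ^ (a - 1))
      (nhdsWithin 0 (Ioi 0)) (nhds ((f 1 + f (-1)) / 2)) := by
  have h11 : ((-1:ℝ)) ≤ 1 := by norm_num
  set F : ℝ → ℝ := Set.IccExtend h11 ((Icc (-1:ℝ) 1).restrict f) with hFdef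
  have hF : Continuous F := (continuousOn_iff_continuous_restrict.mp hf).Icc_extend'
  have hFeq : ∀ t ∈ Icc (-1:ℝ) 1, F t = f t := by
    intro t ht
    rw [hFdef, Set.IccExtend_of_mem h11 _ ht]
    rfl
  have hint : ∀ a : ℝ, (∫ t in (-1:ℝ)..1, f t * (1 - t ^ 2) ^ (a - 1))
      = ∫ t in (-1:ℝ)..1, F t * (1 - t ^ 2) ^ (a - 1) := by
    intro a
    apply intervalIntegral.integral_congr
    intro t ht
    rw [Set.uIcc_of_le h11] at ht
    dsimp only
    rw [hFeq t ht]
  have hF1 : F 1 = f 1 := hFeq 1 (by norm_num)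
  have hFm1 : F (-1) = f (-1) := hFeq (-1) (by norm_num)
  simp only [hint, ← hF1, ← hFm1]
  -- now prove the statement for `F`
  obtain ⟨M, hM⟩ := isCompact_Icc.exists_bound_of_continuousOn (f := F) hF.continuousOn
  set M' : ℝ := max M 1 with hM'def
  have hM'1 : (1:ℝ) ≤ M' := le_max_right _ _
  have hM'0 : (0:ℝ) < M' := by linarith
  have hMall : ∀ t ∈ Icc (-1:ℝ) 1, |F t| ≤ M' :=
    fun t ht => le_trans (hM t ht) (le_max_left _ _)
  rw [Metric.tendsto_nhds]
  intro ε hε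
  set ε' : ℝ := ε / 8 with hε'def
  have hε' : 0 < ε' := by positivity
  obtain ⟨δ₁, hδ₁pos, hδ₁⟩ := Metric.continuousAt_iff.mp (hF.continuousAt (x := 1)) ε' hε'
  obtain ⟨δ₂, hδ₂pos, hδ₂⟩ := Metric.continuousAt_iff.mp (hF.continuousAt (x := -1)) ε' hε'
  set δ : ℝ := min (min δ₁ δ₂) 1 / 2 with hδdef
  have hδpos : 0 < δ := by positivity
  have hδhalf : δ ≤ 1/2 := by
    rw [hδdef]
    have : min (min δ₁ δ₂) 1 ≤ 1 := min_le_right _ _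
    linarith
  have hδlt1 : δ < δ₁ := by
    have h1 : min (min δ₁ δ₂) 1 ≤ δ₁ := le_trans (min_le_left _ _) (min_le_left _ _)
    have h2 : 0 < min (min δ₁ δ₂) 1 := by positivity
    rw [hδdef]; linarith
  have hδlt2 : δ < δ₂ := by
    have h1 : min (min δ₁ δ₂) 1 ≤ δ₂ := le_trans (min_le_left _ _) (min_le_right _ _)
    have h2 : 0 < min (min δ₁ δ₂) 1 := by positivity
    rw [hδdef]; linarith
  set K : ℝ := 1 - (1-δ)^2 with hKdef
  have hK : 0 < K := by rw [hKdef]; nlinarith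
  -- eventual bound from tendsto
  have hrpowcont : Filter.Tendsto (fun a : ℝ => 2 * K ^ (a-1)) (nhdsWithin 0 (Ioi 0))
      (nhds (2 * K ^ (0-1:ℝ))) := by
    have : ContinuousAt (fun a : ℝ => 2 * K ^ (a-1)) 0 := by
      apply ContinuousAt.mul continuousAt_const
      exact (Real.continuousAt_const_rpow hK.ne').comp (continuousAt_id.sub continuousAt_const)
    exact this.tendsto.mono_left nhdsWithin_le_nhds
  have hcK : Filter.Tendsto (fun a : ℝ => M' * ((Real.Gamma (a + 1/2) / (Real.sqrt π * Real.Gamma a)) * (2 * K ^ (a-1))))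
      (nhdsWithin 0 (Ioi 0)) (nhds 0) := by
    have := (tendsto_c.mul hrpowcont).const_mul M'
    simpa using this
  have evB := (Metric.tendsto_nhds.mp hcK) ε' hε'
  have ev0 : ∀ᶠ a : ℝ in nhdsWithin 0 (Ioi 0), a ∈ Ioo (0:ℝ) 1 :=
    Ioo_mem_nhdsGT_of_mem (by norm_num)
  filter_upwards [ev0, evB] with a ha hBa
  obtain ⟨ha0, ha1⟩ := ha
  -- abbreviations
  set c : ℝ := Real.Gamma (a + 1/2) / (Real.sqrt π * Real.Gamma a) with hcdef
  have hGa : 0 < Real.Gamma a := Real.Gamma_pos_of_pos ha0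
  have hGah : 0 < Real.Gamma (a + 1/2) := Real.Gamma_pos_of_pos (by linarith)
  have hc0 : 0 ≤ c := by rw [hcdef]; positivity
  have hb1 : (-1:ℝ) ≤ -1 + δ := by linarith
  have hb2 : (-1:ℝ) + δ ≤ 1 - δ := by linarith
  have hb3 : (1:ℝ) - δ ≤ 1 := by linarith
  -- integrability of pieces
  have hiw1 := integrable_w_sub ha0 ha1 (le_refl (-1:ℝ)) (by linarith : -1+δ ≤ (1:ℝ)) h11 hb1
  have hiwm := integrable_w_sub ha0 ha1 hb1 hb3 (by linarith) (by linarith)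
  have hiw2 := integrable_w_sub ha0 ha1 (by linarith : (-1:ℝ) ≤ 1-δ) (le_refl (1:ℝ)) hb3 h11
  have hiF1 := integrable_Fw ha0 ha1 hF (le_refl (-1:ℝ)) (by linarith : -1+δ ≤ (1:ℝ)) h11 hb1
  have hiFm := integrable_Fw ha0 ha1 hF hb1 hb3 (by linarith) (by linarith)
  have hiF2 := integrable_Fw ha0 ha1 hF (by linarith : (-1:ℝ) ≤ 1-δ) (le_refl (1:ℝ)) hb3 h11
  -- splitting
  have hsplitF : (∫ t in (-1:ℝ)..1, F t * (1 - t^2) ^ (a-1))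
      = (∫ t in (-1:ℝ)..(-1+δ), F t * (1 - t^2) ^ (a-1))
        + (∫ t in (-1+δ:ℝ)..(1-δ), F t * (1 - t^2) ^ (a-1))
        + (∫ t in (1-δ:ℝ)..1, F t * (1 - t^2) ^ (a-1)) := by
    rw [intervalIntegral.integral_add_adjacent_intervals (hiF1) (hiFm),
      intervalIntegral.integral_add_adjacent_intervals (hiF1.trans hiFm) hiF2]
  have hsplitW : (∫ t in (-1:ℝ)..1, (1 - t^2) ^ (a-1))
      = (∫ t in (-1:ℝ)..(-1+δ), (1 - t^2) ^ (a-1))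
        + (∫ t in (-1+δ:ℝ)..(1-δ), (1 - t^2) ^ (a-1))
        + (∫ t in (1-δ:ℝ)..1, (1 - t^2) ^ (a-1)) := by
    rw [intervalIntegral.integral_add_adjacent_intervals (hiw1) (hiwm),
      intervalIntegral.integral_add_adjacent_intervals (hiw1.trans hiwm) hiw2]
  set I1 : ℝ := ∫ t in (-1:ℝ)..(-1+δ), F t * (1 - t^2) ^ (a-1) with hI1def
  set Im : ℝ := ∫ t in (-1+δ:ℝ)..(1-δ), F t * (1 - t^2) ^ (a-1) with hImdef
  set I2 : ℝ := ∫ t in (1-δ:ℝ)..1, F t * (1 - t^2) ^ (a-1) with hI2def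
  set J1 : ℝ := ∫ t in (-1:ℝ)..(-1+δ), (1 - t^2) ^ (a-1) with hJ1def
  set Jm : ℝ := ∫ t in (-1+δ:ℝ)..(1-δ), (1 - t^2) ^ (a-1) with hJmdef
  set J2 : ℝ := ∫ t in (1-δ:ℝ)..1, (1 - t^2) ^ (a-1) with hJ2def
  have hJsym : J2 = J1 := J_symm a δ
  -- total mass
  have htot : c * (J1 + Jm + J2) = 1 := by
    rw [← hsplitW, total_integral ha0 ha1, hcdef]
    field_simp
  -- nonnegativity
  have wnn : ∀ t ∈ Icc (-1:ℝ) 1, 0 ≤ (1 - t^2) ^ (a-1) := by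
    intro t ht
    exact Real.rpow_nonneg (by nlinarith [ht.1, ht.2]) _
  have hJ1nn : 0 ≤ J1 := intervalIntegral.integral_nonneg hb1
    (fun t ht => wnn t ⟨ht.1, by linarith [ht.2]⟩)
  have hJmnn : 0 ≤ Jm := intervalIntegral.integral_nonneg hb2
    (fun t ht => wnn t ⟨by linarith [ht.1], by linarith [ht.2]⟩)
  have hJ2nn : 0 ≤ J2 := intervalIntegral.integral_nonneg hb3
    (fun t ht => wnn t ⟨by linarith [ht.1], ht.2⟩)
  -- mid bound
  have hJmB : Jm ≤ 2 * K ^ (a-1) := by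
    have hKnn : (0:ℝ) ≤ K ^ (a-1) := Real.rpow_nonneg hK.le _
    have h1 : Jm ≤ ∫ _t in (-1+δ:ℝ)..(1-δ), K ^ (a-1) := by
      apply intervalIntegral.integral_mono_on hb2 hiwm intervalIntegrable_const
      intro t ht
      exact Real.rpow_le_rpow_of_nonpos hK (by nlinarith [ht.1, ht.2]) (by linarith)
    rw [intervalIntegral.integral_const, smul_eq_mul] at h1
    calc Jm ≤ (1 - δ - (-1+δ)) * K ^ (a-1) := h1
      _ = 2*K^(a-1) - 2*(δ*K^(a-1)) := by ring
      _ ≤ 2*K^(a-1) := by linarith only [mul_nonneg hδpos.le hKnn]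
  -- endpoint estimates
  have hI2B : |I2 - F 1 * J2| ≤ ε' * J2 := by
    apply key_bound ha0 ha1 hF (by linarith : (-1:ℝ) ≤ 1-δ) hb3 (le_refl (1:ℝ))
    intro t ht
    have : dist t 1 < δ₁ := by
      rw [Real.dist_eq, abs_of_nonpos (by linarith [ht.2])]
      linarith [ht.1]
    exact le_of_lt (by rw [← Real.dist_eq]; exact hδ₁ this)
  have hI1B : |I1 - F (-1) * J1| ≤ ε' * J1 := by
    apply key_bound ha0 ha1 hF (le_refl (-1:ℝ)) hb1 (by linarith : -1+δ ≤ (1:ℝ))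
    intro t ht
    have : dist t (-1) < δ₂ := by
      rw [Real.dist_eq, abs_of_nonneg (by linarith [ht.1])]
      linarith [ht.2]
    exact le_of_lt (by rw [← Real.dist_eq]; exact hδ₂ this)
  have hImB : |Im| ≤ M' * Jm := by
    have := key_bound (v := (0:ℝ)) (ε' := M') ha0 ha1 hF hb1 hb2 hb3 ?_
    · simpa using this
    · intro t ht
      simpa using hMall t ⟨by linarith [ht.1], by linarith [ht.2]⟩
  -- relation cJ2 = (1 - c Jm)/2
  have hexp : c * J1 + c * Jm + c * J2 = 1 := by linear_combination htot
  have hhalf : c * J2 - 1/2 = -(c * Jm)/2 := by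
    rw [hJsym] at hexp ⊢
    linarith only [hexp]
  have hhalf1 : c * J1 - 1/2 = -(c * Jm)/2 := by rw [← hJsym]; exact hhalf
  -- bound on c * Jm
  have hBnn : 0 ≤ c * (2 * K ^ (a-1)) :=
    mul_nonneg hc0 (by positivity)
  have hMcJm : M' * (c * Jm) < ε' := by
    have h1 : M' * (c * Jm) ≤ M' * (c * (2 * K ^ (a-1))) := by
      apply mul_le_mul_of_nonneg_left (mul_le_mul_of_nonneg_left hJmB hc0) hM'0.le
    have h2 : |M' * (c * (2 * K ^ (a-1)))| < ε' := by
      simpa only [Real.dist_eq, sub_zero] using hBa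
    calc M' * (c * Jm) ≤ M' * (c * (2 * K ^ (a-1))) := h1
      _ ≤ |M' * (c * (2 * K ^ (a-1)))| := le_abs_self _
      _ < ε' := h2
  have hcJmnn : 0 ≤ c * Jm := mul_nonneg hc0 hJmnn
  have hcJm_lt : c * Jm < ε' := by
    have h3 : 1 * (c*Jm) ≤ M' * (c*Jm) := mul_le_mul_of_nonneg_right hM'1 hcJmnn
    linarith only [hMcJm, h3]
  -- final estimate
  rw [Real.dist_eq, hsplitF]
  have hFb1 : |F 1| ≤ M' := hMall 1 (by norm_num)
  have hFbm1 : |F (-1)| ≤ M' := hMall (-1) (by norm_num)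
  have hid : c * (I1 + Im + I2) - (F 1 + F (-1))/2
      = c*(I1 - F (-1)*J1) + F (-1)*(c*J1 - 1/2) + c*Im + c*(I2 - F 1*J2)
        + F 1*(c*J2 - 1/2) := by ring
  rw [hid]
  have habs : |c*(I1 - F (-1)*J1) + F (-1)*(c*J1 - 1/2) + c*Im + c*(I2 - F 1*J2)
        + F 1*(c*J2 - 1/2)|
      ≤ |c*(I1 - F (-1)*J1)| + |F (-1)*(c*J1 - 1/2)| + |c*Im| + |c*(I2 - F 1*J2)|
        + |F 1*(c*J2 - 1/2)| := by
    calc _ ≤ |c*(I1 - F (-1)*J1) + F (-1)*(c*J1 - 1/2) + c*Im + c*(I2 - F 1*J2)|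
        + |F 1*(c*J2 - 1/2)| := abs_add_le _ _
      _ ≤ (|c*(I1 - F (-1)*J1) + F (-1)*(c*J1 - 1/2) + c*Im| + |c*(I2 - F 1*J2)|)
        + |F 1*(c*J2 - 1/2)| := by gcongr; exact abs_add_le _ _
      _ ≤ ((|c*(I1 - F (-1)*J1)| + |F (-1)*(c*J1 - 1/2)| + |c*Im|) + |c*(I2 - F 1*J2)|)
        + |F 1*(c*J2 - 1/2)| := by gcongr; exact abs_add_three _ _ _
      _ = _ := by ring
  have e1 : |c*(I1 - F (-1)*J1)| ≤ c * (ε' * J1) := by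
    rw [abs_mul, abs_of_nonneg hc0]
    exact mul_le_mul_of_nonneg_left hI1B hc0
  have e2 : |F (-1)*(c*J1 - 1/2)| ≤ M' * (c*Jm/2) := by
    rw [abs_mul, hhalf1]
    have : |-(c * Jm)/2| = c*Jm/2 := by
      rw [abs_div, abs_neg, abs_of_nonneg hcJmnn]
      norm_num
    rw [this]
    exact mul_le_mul_of_nonneg_right hFbm1 (by positivity)
  have e3 : |c*Im| ≤ c * (M' * Jm) := by
    rw [abs_mul, abs_of_nonneg hc0]
    exact mul_le_mul_of_nonneg_left hImB hc0
  have e4 : |c*(I2 - F 1*J2)| ≤ c * (ε' * J2) := by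
    rw [abs_mul, abs_of_nonneg hc0]
    exact mul_le_mul_of_nonneg_left hI2B hc0
  have e5 : |F 1*(c*J2 - 1/2)| ≤ M' * (c*Jm/2) := by
    rw [abs_mul, hhalf]
    have : |-(c * Jm)/2| = c*Jm/2 := by
      rw [abs_div, abs_neg, abs_of_nonneg hcJmnn]
      norm_num
    rw [this]
    exact mul_le_mul_of_nonneg_right hFb1 (by positivity)
  -- combine
  have hsum1 : c*J1 + c*J2 ≤ 1 := by linarith only [hexp, hcJmnn]
  have hcJ1nn : 0 ≤ c * J1 := mul_nonneg hc0 hJ1nn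
  have hcJ2nn : 0 ≤ c * J2 := mul_nonneg hc0 hJ2nn
  have hterm1 : c * (ε' * J1) + c * (ε' * J2) ≤ ε' := by
    calc c * (ε' * J1) + c * (ε' * J2) = ε' * (c*J1 + c*J2) := by ring
      _ ≤ ε' * 1 := mul_le_mul_of_nonneg_left hsum1 hε'.le
      _ = ε' := mul_one _
  have hterm2 : c * (M' * Jm) = M' * (c * Jm) := by ring
  have : |c*(I1 - F (-1)*J1) + F (-1)*(c*J1 - 1/2) + c*Im + c*(I2 - F 1*J2)
        + F 1*(c*J2 - 1/2)| ≤ ε' + 2 * (M' * (c*Jm)) := by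
    calc _ ≤ _ := habs
      _ ≤ c * (ε' * J1) + M' * (c*Jm/2) + c * (M' * Jm) + c * (ε' * J2) + M' * (c*Jm/2) := by
          exact add_le_add (add_le_add (add_le_add (add_le_add e1 e2) e3) e4) e5
      _ ≤ ε' + 2 * (M' * (c*Jm)) := by
          rw [hterm2]; linarith only [hterm1]
  calc |c*(I1 - F (-1)*J1) + F (-1)*(c*J1 - 1/2) + c*Im + c*(I2 - F 1*J2)
        + F 1*(c*J2 - 1/2)| ≤ ε' + 2 * (M' * (c*Jm)) := this
    _ < ε' + 2 * ε' := by linarith only [hMcJm]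
    _ < ε := by rw [hε'def]; linarith only [hε]
end

section
/- Let a, b ≥ 0 and let y be a polynomial that is orthogonal of degree m with respect to |t|^{2b}(1 - t^2)^{a - 1/2} on [-1,1] (a generalized Gegenbauer polynomial C_m^{(a,b)}). Then y satisfies the difference-differential equation (1 - t^2) y''(t) - (2a + 2b + 1) t y'(t) + (2b/t)( y'(t) - (y(t) - y(-t))/(2t) ) + m(m + 2a + 2b) y(t) = 0 for all t ≠ 0. -/
open Real MeasureTheory Set

namespace GG

noncomputable def w (a b t : ℝ) : ℝ := |t| ^ (2*b) * (1 - t^2) ^ (a - 1/2)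

lemma w_eq (a b t : ℝ) : w a b t = (t^2)^b * (1-t^2)^(a-1/2) := by
  unfold w
  rw [Real.rpow_mul (abs_nonneg t), show ((2:ℝ) = ((2:ℕ):ℝ)) by norm_num,
    Real.rpow_natCast, sq_abs]

lemma w_meas (a b : ℝ) : Measurable (w a b) := by
  unfold w
  exact ((measurable_abs.pow_const _).mul
    ((measurable_const.sub (measurable_id.pow_const 2)).pow_const _))

lemma w_nonneg (a b t : ℝ) (ht : |t| ≤ 1) : 0 ≤ w a b t := by
  unfold w
  apply mul_nonneg (Real.rpow_nonneg (abs_nonneg t) _)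
  apply Real.rpow_nonneg
  nlinarith [abs_nonneg t, sq_abs t]

lemma w_pos (a b t : ℝ) (ht : |t| < 1) (ht0 : t ≠ 0) : 0 < w a b t := by
  unfold w
  apply mul_pos (Real.rpow_pos_of_pos (abs_pos.mpr ht0) _)
  apply Real.rpow_pos_of_pos
  nlinarith [abs_nonneg t, sq_abs t]

lemma int_mul_w (a b : ℝ) (ha : 0 ≤ a) (hb : 0 ≤ b) {g : ℝ → ℝ} (hg : Continuous g) :
    IntervalIntegrable (fun t => g t * w a b t) volume (-1) 1 := by
  set r := a - 1/2 with hrdef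
  have hr1 : (-1:ℝ) < r := by rw [hrdef]; linarith
  obtain ⟨M, hM⟩ := (isCompact_Icc (a := (-1:ℝ)) (b := 1)).exists_bound_of_continuousOn
    hg.continuousOn
  have hM0 : 0 ≤ M := le_trans (norm_nonneg (g 0)) (hM 0 (by norm_num))
  set C : ℝ := max 1 (2 ^ r) with hC
  have hC1 : (1:ℝ) ≤ C := le_max_left _ _
  have hC0 : (0:ℝ) ≤ C := by linarith
  have hfact : ∀ x : ℝ, 1 ≤ x → x ≤ 2 → x ^ r ≤ C := by
    intro x hx hx2
    rcases le_or_gt 0 r with h | h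
    · exact le_trans (Real.rpow_le_rpow (by linarith) hx2 h) (le_max_right _ _)
    · exact le_trans (Real.rpow_le_one_of_one_le_of_nonpos hx h.le) hC1
  have hmeas : AEStronglyMeasurable (fun t => g t * w a b t)
      (volume.restrict (Ioc (-1:ℝ) 0 ∪ Ioc 0 1)) :=
    ((hg.measurable.mul (w_meas a b)).aestronglyMeasurable)
  have hsplit : Ioc (-1:ℝ) 1 = Ioc (-1) 0 ∪ Ioc 0 1 :=
    (Ioc_union_Ioc_eq_Ioc (by norm_num) (by norm_num)).symm
  rw [intervalIntegrable_iff_integrableOn_Ioc_of_le (by norm_num), hsplit]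
  have hbound : ∀ t : ℝ, t ∈ Icc (-1:ℝ) 1 →
      ‖g t * w a b t‖ ≤ M * C * ((1-t)^r * (1+t)^r) := by
    intro t ht
    obtain ⟨ht1, ht2⟩ := ht
    have habs : |t| ≤ 1 := abs_le.mpr ⟨ht1, ht2⟩
    have h1t : (0:ℝ) ≤ 1 - t := by linarith
    have h2t : (0:ℝ) ≤ 1 + t := by linarith
    have hw : w a b t = |t|^(2*b) * ((1-t)^r * (1+t)^r) := by
      rw [← Real.mul_rpow h1t h2t, show (1-t)*(1+t) = 1 - t^2 by ring]
      rfl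
    have h4 : |t|^(2*b) ≤ 1 := Real.rpow_le_one (abs_nonneg t) habs (by linarith)
    have h5 : (0:ℝ) ≤ (1-t)^r * (1+t)^r :=
      mul_nonneg (Real.rpow_nonneg h1t _) (Real.rpow_nonneg h2t _)
    calc ‖g t * w a b t‖ = |g t| * |w a b t| := by rw [norm_mul]; rfl
      _ = |g t| * w a b t := by rw [abs_of_nonneg (w_nonneg a b t habs)]
      _ ≤ M * w a b t := by
          apply mul_le_mul_of_nonneg_right (hM t ⟨ht1, ht2⟩) (w_nonneg a b t habs)
      _ = M * (|t|^(2*b) * ((1-t)^r * (1+t)^r)) := by rw [hw]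
      _ ≤ M * (1 * ((1-t)^r * (1+t)^r)) := by
          apply mul_le_mul_of_nonneg_left _ hM0
          exact mul_le_mul_of_nonneg_right h4 h5
      _ = M * ((1-t)^r * (1+t)^r) := by ring
      _ ≤ M * C * ((1-t)^r * (1+t)^r) := by
          nlinarith [mul_nonneg (mul_nonneg hM0 (by linarith : (0:ℝ) ≤ C - 1)) h5]
  apply IntegrableOn.union
  · -- on Ioc (-1) 0, dominate by (M * C * 2^?) * (1+t)^r ; here (1-t)^r ≤ C
    have h1p : IntervalIntegrable (fun x : ℝ => (1+x)^r) volume (-1) 0 := by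
      simpa using (intervalIntegral.intervalIntegrable_rpow' (a := 0) (b := 1) hr1).comp_add_left 1
    have hint : IntegrableOn (fun t : ℝ => (M*C*C) * (1+t)^r) (Ioc (-1:ℝ) 0) :=
      (((intervalIntegrable_iff_integrableOn_Ioc_of_le (by norm_num)).mp h1p)).const_mul _
    apply Integrable.mono' hint (hg.measurable.mul (w_meas a b)).aestronglyMeasurable.restrict
    rw [ae_restrict_iff' measurableSet_Ioc]
    filter_upwards with t ht
    have h2t : (0:ℝ) ≤ 1 + t := by linarith [ht.1]
    have hfc : (1-t)^r ≤ C := hfact _ (by linarith [ht.2]) (by linarith [ht.1])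
    calc ‖g t * w a b t‖ ≤ M * C * ((1-t)^r * (1+t)^r) :=
          hbound t ⟨ht.1.le, by linarith [ht.2]⟩
      _ ≤ M * C * (C * (1+t)^r) := by
          apply mul_le_mul_of_nonneg_left _ (mul_nonneg hM0 hC0)
          exact mul_le_mul_of_nonneg_right hfc (Real.rpow_nonneg h2t _)
      _ = (M*C*C) * (1+t)^r := by ring
  · have h1m : IntervalIntegrable (fun x : ℝ => (1-x)^r) volume 0 1 := by
      simpa using ((intervalIntegral.intervalIntegrable_rpow' (a := 0) (b := 1) hr1).comp_sub_left 1).symm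
    have hint : IntegrableOn (fun t : ℝ => (M*C*C) * (1-t)^r) (Ioc (0:ℝ) 1) :=
      (((intervalIntegrable_iff_integrableOn_Ioc_of_le (by norm_num)).mp h1m)).const_mul _
    apply Integrable.mono' hint (hg.measurable.mul (w_meas a b)).aestronglyMeasurable.restrict
    rw [ae_restrict_iff' measurableSet_Ioc]
    filter_upwards with t ht
    have h1t : (0:ℝ) ≤ 1 - t := by linarith [ht.2]
    have hfc : (1+t)^r ≤ C := hfact _ (by linarith [ht.1]) (by linarith [ht.2])
    calc ‖g t * w a b t‖ ≤ M * C * ((1-t)^r * (1+t)^r) :=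
          hbound t ⟨by linarith [ht.1], ht.2⟩
      _ ≤ M * C * ((1-t)^r * C) := by
          apply mul_le_mul_of_nonneg_left _ (mul_nonneg hM0 hC0)
          exact mul_le_mul_of_nonneg_left hfc (Real.rpow_nonneg h1t _)
      _ = (M*C*C) * (1-t)^r := by ring

lemma intPoly (a b : ℝ) (ha : 0 ≤ a) (hb : 0 ≤ b) (q : Polynomial ℝ) :
    IntervalIntegrable (fun t => q.eval t * w a b t) volume (-1) 1 :=
  int_mul_w a b ha hb q.continuous
variable {a b : ℝ}

-- continuity helpers
lemma contSq (hb : 0 ≤ b) : Continuous fun t : ℝ => (t^2)^b :=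
  (Real.continuous_rpow_const hb).comp (continuous_pow 2)

lemma contOm (c : ℝ) (hc : 0 ≤ c) : Continuous fun t : ℝ => (1-t^2)^c :=
  (Real.continuous_rpow_const hc).comp (continuous_const.sub (continuous_pow 2))

section deriv
variable (a b : ℝ) (n : ℕ)

noncomputable def G (t : ℝ) : ℝ := t^(2*n+1) * ((t^2)^b * (1-t^2)^(a+1/2))

noncomputable def H (t : ℝ) : ℝ :=
  ((2*n+1+2*b) * t^(2*n) - (2*n+2+2*a+2*b) * t^(2*n+2)) * ((t^2)^b * (1-t^2)^(a-1/2))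

lemma G_cont (ha : 0 ≤ a) (hb : 0 ≤ b) : Continuous (G a b n) :=
  (continuous_pow _).mul ((contSq hb).mul (contOm (a+1/2) (by linarith)))

lemma G_deriv (ha : 0 ≤ a) (hb : 0 ≤ b) :
    ∀ x ∈ Ioo (-1:ℝ) 1, HasDerivAt (G a b n) (H a b n x) x := by
  intro x hx
  have h1x : (0:ℝ) < 1 - x^2 := by nlinarith [hx.1, hx.2]
  rcases eq_or_ne x 0 with rfl | hx0
  · -- x = 0
    rcases eq_or_lt_of_le hb with rfl | hbpos
    · -- b = 0
      have d1 : HasDerivAt (fun t : ℝ => t^(2*n+1)) ((2*n+1 : ℝ) * 0^(2*n)) 0 := by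
        simpa using hasDerivAt_pow (2*n+1) (0:ℝ)
      have d3 : HasDerivAt (fun t : ℝ => (1-t^2)^(a+1/2))
          ((-(2*(0:ℝ)^1)) * (a+1/2) * (1-(0:ℝ)^2)^(a+1/2-1)) 0 := by
        have inner : HasDerivAt (fun t : ℝ => 1-t^2) (-(2*(0:ℝ)^1)) 0 :=
          ((hasDerivAt_pow 2 (0:ℝ))).const_sub 1
        exact inner.rpow_const (Or.inl h1x.ne')
      have heq : G a 0 n = fun t : ℝ => t^(2*n+1) * (1-t^2)^(a+1/2) := by
        funext t; simp [G]
      rw [heq]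
      have : HasDerivAt (fun t : ℝ => t^(2*n+1) * (1-t^2)^(a+1/2)) _ 0 := d1.mul d3
      convert this using 1
      simp only [H, Real.one_rpow, Real.rpow_zero, zero_pow (by omega : 2*n+2 ≠ 0)]
      norm_num
    · -- b > 0
      have hG0 : G a b n 0 = 0 := by simp [G, zero_pow (by omega : 2*n+1 ≠ 0)]
      have hH0 : H a b n 0 = 0 := by
        simp only [H]
        rw [show ((0:ℝ)^2) = 0 by norm_num, Real.zero_rpow hbpos.ne']
        ring
      rw [hH0, hasDerivAt_iff_tendsto_slope]
      set φ : ℝ → ℝ := fun t => t^(2*n) * ((t^2)^b * (1-t^2)^(a+1/2)) with hφ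
      have hφc : Continuous φ :=
        (continuous_pow _).mul ((contSq hb).mul (contOm (a+1/2) (by linarith)))
      have hφ0 : φ 0 = 0 := by
        simp only [hφ]
        rw [show ((0:ℝ)^2) = 0 by norm_num, Real.zero_rpow hbpos.ne']
        ring
      have htend : Filter.Tendsto φ (nhdsWithin 0 {(0:ℝ)}ᶜ) (nhds 0) := by
        have := hφc.tendsto 0
        rw [hφ0] at this
        exact this.mono_left nhdsWithin_le_nhds
      apply htend.congr'
      filter_upwards [self_mem_nhdsWithin] with t ht
      have ht0 : t ≠ 0 := ht
      rw [slope_def_field]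
      rw [hG0, hφ]
      unfold G
      field_simp
      ring
  · -- x ≠ 0
    have hx2 : x^2 ≠ 0 := pow_ne_zero 2 hx0
    have d1 : HasDerivAt (fun t : ℝ => t^(2*n+1)) ((2*n+1 : ℝ) * x^(2*n)) x := by
      simpa using hasDerivAt_pow (2*n+1) x
    have d2 : HasDerivAt (fun t : ℝ => (t^2)^b) ((2*x^1) * b * (x^2)^(b-1)) x :=
      (hasDerivAt_pow 2 x).rpow_const (Or.inl hx2)
    have d3 : HasDerivAt (fun t : ℝ => (1-t^2)^(a+1/2))
        ((-(2*x^1)) * (a+1/2) * (1-x^2)^(a+1/2-1)) x := by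
      have inner : HasDerivAt (fun t : ℝ => 1-t^2) (-(2*x^1)) x :=
        ((hasDerivAt_pow 2 x)).const_sub 1
      exact inner.rpow_const (Or.inl h1x.ne')
    rw [show G a b n = fun t : ℝ => t^(2*n+1) * (t^2)^b * (1-t^2)^(a+1/2) from
      funext fun t => by unfold G; ring]
    have total : HasDerivAt (fun t : ℝ => t^(2*n+1) * (t^2)^b * (1-t^2)^(a+1/2)) _ x :=
      (d1.mul d2).mul d3
    simp only [Pi.mul_apply] at total
    convert total using 1
    unfold H
    rw [show a+1/2-1 = a-1/2+1-1 by ring, show a+1/2 = a-1/2+1 by ring]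
    rw [Real.rpow_add_one h1x.ne', add_sub_cancel_right]
    rw [show b - 1 = b+1-1-1 by ring, show (x^2)^(b+1-1-1) = (x^2)^b / (x^2) by
      rw [Real.rpow_sub_one hx2]; ring_nf]
    field_simp
    ring
end deriv

noncomputable def mu (a b : ℝ) (n : ℕ) : ℝ := ∫ t in (-1:ℝ)..1, t^n * w a b t

lemma w_even (a b t : ℝ) : w a b (-t) = w a b t := by unfold w; rw [abs_neg, neg_pow]; ring_nf

lemma mu_odd (a b : ℝ) (n : ℕ) : mu a b (2*n+1) = 0 := by
  unfold mu
  have h := intervalIntegral.integral_comp_neg (a := (-1:ℝ)) (b := 1)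
    (fun t => t^(2*n+1) * w a b t)
  simp only [neg_neg] at h
  have heq : (fun x : ℝ => (-x)^(2*n+1) * w a b (-x)) = fun x : ℝ => -(x^(2*n+1) * w a b x) := by
    funext x
    rw [w_even, Odd.neg_pow ⟨n, by ring⟩]
    ring
  rw [heq, intervalIntegral.integral_neg] at h
  linarith

lemma mu_rec (a b : ℝ) (ha : 0 ≤ a) (hb : 0 ≤ b) (n : ℕ) :
    (2*n+1+2*b) * mu a b (2*n) = (2*n+2+2*a+2*b) * mu a b (2*n+2) := by
  have hint1 : IntervalIntegrable (fun t => t^(2*n) * w a b t) volume (-1) 1 :=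
    int_mul_w a b ha hb (continuous_pow _)
  have hint2 : IntervalIntegrable (fun t => t^(2*n+2) * w a b t) volume (-1) 1 :=
    int_mul_w a b ha hb (continuous_pow _)
  have hH : IntervalIntegrable (H a b n) volume (-1) 1 := by
    have : H a b n = fun t =>
        ((2*n+1+2*b) * t^(2*n) - (2*n+2+2*a+2*b) * t^(2*n+2)) * w a b t := by
      funext t; rw [w_eq]; rfl
    rw [this]
    exact int_mul_w a b ha hb (by continuity)
  have hftc := intervalIntegral.integral_eq_sub_of_hasDeriv_right_of_le (by norm_num)
    ((G_cont a b n ha hb).continuousOn)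
    (fun x hx => (G_deriv a b n ha hb x hx).hasDerivWithinAt) hH
  have hG1 : G a b n 1 = 0 := by
    unfold G
    rw [show (1:ℝ) - 1^2 = 0 by norm_num,
      Real.zero_rpow (ne_of_gt (by linarith : (0:ℝ) < a + 1/2))]
    ring
  have hGm1 : G a b n (-1) = 0 := by
    unfold G
    rw [show (1:ℝ) - (-1)^2 = 0 by norm_num,
      Real.zero_rpow (ne_of_gt (by linarith : (0:ℝ) < a + 1/2))]
    ring
  have hHre : H a b n = fun t => (2*n+1+2*b) * (t^(2*n) * w a b t)
      - (2*n+2+2*a+2*b) * (t^(2*n+2) * w a b t) := by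
    funext t
    rw [w_eq]
    unfold H
    ring
  have hval : ∫ y in (-1:ℝ)..1, H a b n y
      = (2*n+1+2*b) * mu a b (2*n) - (2*n+2+2*a+2*b) * mu a b (2*n+2) := by
    rw [hHre, intervalIntegral.integral_sub (hint1.const_mul _) (hint2.const_mul _),
      intervalIntegral.integral_const_mul, intervalIntegral.integral_const_mul]
    rfl
  rw [hG1, hGm1, hval] at hftc
  linarith

noncomputable def Acoef (b : ℝ) (k : ℕ) : ℝ :=
  (k:ℝ)*((k:ℝ)-1) + 2*b*((k:ℝ) - (if Even k then 0 else 1))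

noncomputable def lam (a b : ℝ) (k : ℕ) : ℝ := (k:ℝ)*((k:ℝ)+2*a+2*b)

lemma Acoef_zero (b : ℝ) : Acoef b 0 = 0 := by simp [Acoef]
lemma Acoef_one (b : ℝ) : Acoef b 1 = 0 := by norm_num [Acoef, Nat.not_even_one]

lemma SA (a b : ℝ) (ha : 0 ≤ a) (hb : 0 ≤ b) (k n : ℕ) :
    Acoef b k * mu a b (k+n-2) - lam a b k * mu a b (k+n)
      = Acoef b n * mu a b (k+n-2) - lam a b n * mu a b (k+n) := by
  rcases Nat.even_or_odd (k+n) with he | ho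
  · -- even
    rcases Nat.eq_zero_or_pos (k+n) with h0 | hpos
    · obtain ⟨hk, hn⟩ := Nat.add_eq_zero.mp h0
      subst hk; subst hn; rfl
    · obtain ⟨j', hj'⟩ : ∃ j', k + n = 2*j' + 2 := by
        obtain ⟨c, hc⟩ := he
        exact ⟨c - 1, by omega⟩
      have hc : (k:ℝ) + (n:ℝ) = 2*(j':ℝ) + 2 := by exact_mod_cast congrArg Nat.cast hj'
      have R0 := mu_rec a b ha hb j'
      rw [show 2*j'+2 = k+n by omega, show 2*j' = k+n-2 by omega] at R0
      have R : ((k:ℝ)+(n:ℝ)-1+2*b) * mu a b (k+n-2)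
          = ((k:ℝ)+(n:ℝ)+2*a+2*b) * mu a b (k+n) := by
        linear_combination R0 + (mu a b (k+n-2) - mu a b (k+n)) * hc
      have hpar : (if Even n then (0:ℝ) else 1) = (if Even k then (0:ℝ) else 1) := by
        have : Even n ↔ Even k := by
          rw [Nat.even_add] at he
          tauto
        simp [this]
      have hD : ((k:ℝ)+(n:ℝ)+2*a+2*b) ≠ 0 := by
        have : (1:ℝ) ≤ (k:ℝ) + (n:ℝ) := by exact_mod_cast hpos
        positivity
      apply mul_left_cancel₀ hD
      unfold Acoef lam
      rw [hpar]
      linear_combination ((k:ℝ)-(n:ℝ)) * ((k:ℝ)+(n:ℝ)+2*a+2*b) * R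
  · -- odd
    obtain ⟨j, hj⟩ := ho
    have hμ : mu a b (k+n) = 0 := by
      rw [hj]; exact mu_odd a b j
    rcases Nat.lt_or_ge (k+n) 3 with h3 | h3
    · -- k+n = 1
      have h1 : k + n = 1 := by omega
      have hA : Acoef b k = 0 ∧ Acoef b n = 0 := by
        rcases Nat.add_eq_one_iff.mp h1 with ⟨hk, hn⟩ | ⟨hk, hn⟩ <;> subst hk <;> subst hn
        · exact ⟨Acoef_zero b, Acoef_one b⟩
        · exact ⟨Acoef_one b, Acoef_zero b⟩
      rw [hμ, hA.1, hA.2]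
      ring
    · have hμ2 : mu a b (k+n-2) = 0 := by
        rw [show k+n-2 = 2*(j-1)+1 by omega]
        exact mu_odd a b (j-1)
      rw [hμ, hμ2]
      ring

open Polynomial in
noncomputable def Phi (a b : ℝ) (q : Polynomial ℝ) : ℝ := ∫ t in (-1:ℝ)..1, q.eval t * w a b t

open Polynomial

lemma Phi_sum (a b : ℝ) (ha : 0 ≤ a) (hb : 0 ≤ b) {ι : Type*} (s : Finset ι)
    (f : ι → Polynomial ℝ) : Phi a b (∑ i ∈ s, f i) = ∑ i ∈ s, Phi a b (f i) := by
  unfold Phi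
  rw [show (fun t => (∑ i ∈ s, f i).eval t * w a b t)
      = fun t => ∑ i ∈ s, (f i).eval t * w a b t from
    funext fun t => by rw [eval_finset_sum, Finset.sum_mul]]
  exact intervalIntegral.integral_finset_sum (fun i _ => intPoly a b ha hb (f i))

lemma Phi_add (a b : ℝ) (ha : 0 ≤ a) (hb : 0 ≤ b) (q r : Polynomial ℝ) :
    Phi a b (q + r) = Phi a b q + Phi a b r := by
  unfold Phi
  rw [show (fun t => (q + r).eval t * w a b t)
      = fun t => q.eval t * w a b t + r.eval t * w a b t from
    funext fun t => by rw [eval_add, add_mul]]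
  exact intervalIntegral.integral_add (intPoly a b ha hb q) (intPoly a b ha hb r)

lemma Phi_sub (a b : ℝ) (ha : 0 ≤ a) (hb : 0 ≤ b) (q r : Polynomial ℝ) :
    Phi a b (q - r) = Phi a b q - Phi a b r := by
  unfold Phi
  rw [show (fun t => (q - r).eval t * w a b t)
      = fun t => q.eval t * w a b t - r.eval t * w a b t from
    funext fun t => by rw [eval_sub, sub_mul]]
  exact intervalIntegral.integral_sub (intPoly a b ha hb q) (intPoly a b ha hb r)

lemma Phi_Cmul (a b c : ℝ) (q : Polynomial ℝ) : Phi a b (C c * q) = c * Phi a b q := by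
  unfold Phi
  rw [show (fun t => (C c * q).eval t * w a b t)
      = fun t => c * (q.eval t * w a b t) from
    funext fun t => by rw [eval_mul, eval_C, mul_assoc]]
  exact intervalIntegral.integral_const_mul c _

lemma Phi_X (a b : ℝ) (i : ℕ) : Phi a b (X^i) = mu a b i := by
  unfold Phi mu
  simp only [eval_pow, eval_X]

lemma PhiCX (a b c : ℝ) (i : ℕ) : Phi a b (C c * X^i) = c * mu a b i := by
  rw [Phi_Cmul, Phi_X]

end GG

open GG Polynomial

theorem stmt3 (a b : ℝ) (ha : 0 ≤ a) (hb : 0 ≤ b) (m : ℕ) (p : Polynomial ℝ)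
    (hp : p ≠ 0) (hdeg : p.natDegree = m)
    (horth : ∀ q : Polynomial ℝ, q.natDegree < m →
      ∫ t in (-1 : ℝ)..1,
        p.eval t * q.eval t * |t| ^ (2 * b) * (1 - t ^ 2) ^ (a - 1/2) = 0) :
    ∀ t : ℝ, t ≠ 0 →
      (1 - t ^ 2) * p.derivative.derivative.eval t
        - (2 * a + 2 * b + 1) * t * p.derivative.eval t
        + (2 * b / t) * (p.derivative.eval t - (p.eval t - p.eval (-t)) / (2 * t))
        + (m : ℝ) * ((m : ℝ) + 2 * a + 2 * b) * p.eval t = 0 := by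
  intro t ht
  rcases Nat.eq_zero_or_pos m with hm0 | hm
  · -- degree 0 case
    subst hm0
    have hpc := Polynomial.eq_C_of_natDegree_eq_zero hdeg
    rw [hpc]
    simp
  -- m ≥ 1
  have Horth : ∀ q : Polynomial ℝ, q.natDegree < m → Phi a b (p * q) = 0 := by
    intro q hq
    unfold Phi
    rw [show (fun s => (p*q).eval s * w a b s)
        = fun s => p.eval s * q.eval s * |s|^(2*b) * (1-s^2)^(a-1/2) from
      funext fun s => by unfold GG.w; rw [eval_mul]; ring]
    exact horth q hq
  set Tp : Polynomial ℝ := ∑ k ∈ Finset.range (m+1),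
    C (p.coeff k) * (C (Acoef b k) * X^(k-2) - C (lam a b k) * X^k) with hTp
  set Q : Polynomial ℝ := Tp + C (lam a b m) * p with hQdef
  have hP : p = ∑ k ∈ Finset.range (m+1), C (p.coeff k) * X^k := by
    conv_lhs => rw [p.as_sum_range' (m+1) (by omega)]
    exact Finset.sum_congr rfl fun k _ => C_mul_X_pow_eq_monomial.symm
  have E1 : ∀ j : ℕ, Phi a b (p * X^j)
      = ∑ k ∈ Finset.range (m+1), p.coeff k * mu a b (k+j) := by
    intro j
    conv_lhs => rw [hP]
    rw [Finset.sum_mul, Phi_sum a b ha hb]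
    refine Finset.sum_congr rfl fun k _ => ?_
    rw [mul_assoc, ← pow_add, PhiCX]
  have E2 : ∀ n : ℕ, Phi a b (Tp * X^n)
      = ∑ k ∈ Finset.range (m+1),
          p.coeff k * (Acoef b k * mu a b (k-2+n) - lam a b k * mu a b (k+n)) := by
    intro n
    rw [hTp, Finset.sum_mul, Phi_sum a b ha hb]
    refine Finset.sum_congr rfl fun k _ => ?_
    rw [show C (p.coeff k) * (C (Acoef b k) * X^(k-2) - C (lam a b k) * X^k) * X^n
        = C (p.coeff k * Acoef b k) * X^(k-2+n) - C (p.coeff k * lam a b k) * X^(k+n) by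
      rw [C_mul, C_mul]; ring]
    rw [Phi_sub a b ha hb, PhiCX, PhiCX]
    ring
  have E3 : ∀ n : ℕ, Phi a b (Tp * X^n)
      = Acoef b n * Phi a b (p * X^(n-2)) - lam a b n * Phi a b (p * X^n) := by
    intro n
    rw [E2, E1, E1, Finset.mul_sum, Finset.mul_sum, ← Finset.sum_sub_distrib]
    refine Finset.sum_congr rfl fun k _ => ?_
    have h1 : Acoef b k * mu a b (k-2+n) = Acoef b k * mu a b (k+n-2) := by
      match k with
      | 0 => rw [Acoef_zero]; ring
      | 1 => rw [Acoef_one]; ring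
      | (k+2) => rw [show k+2-2+n = k+2+n-2 by omega]
    have h2 : Acoef b n * mu a b (k+(n-2)) = Acoef b n * mu a b (k+n-2) := by
      match n with
      | 0 => rw [Acoef_zero]; ring
      | 1 => rw [Acoef_one]; ring
      | (n+2) => rw [show k+(n+2-2) = k+(n+2)-2 by omega]
    have hsa := SA a b ha hb k n
    linear_combination p.coeff k * h1 + p.coeff k * hsa - p.coeff k * h2
  have E4 : ∀ n : ℕ, n ≤ m → Phi a b (Q * X^n) = 0 := by
    intro n hn
    rw [show Q * X^n = Tp * X^n + C (lam a b m) * (p * X^n) by rw [hQdef]; ring]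
    rw [Phi_add a b ha hb, Phi_Cmul, E3]
    have h2 : Phi a b (p * X^(n-2)) = 0 :=
      Horth _ (by rw [natDegree_X_pow]; omega)
    rcases eq_or_lt_of_le hn with rfl | hlt
    · rw [h2]; ring
    · rw [h2, Horth _ (by rw [natDegree_X_pow]; omega)]; ring
  have hQdeg : Q.natDegree < m + 1 := by
    have h1 : Tp.natDegree ≤ m := by
      apply natDegree_sum_le_of_forall_le
      intro k hk
      have hk' : k ≤ m := by
        have := Finset.mem_range.mp hk; omega
      refine le_trans (natDegree_C_mul_le _ _) (le_trans (natDegree_sub_le _ _) ?_)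
      simp only [max_le_iff]
      exact ⟨le_trans (natDegree_C_mul_X_pow_le _ _) (by omega),
        le_trans (natDegree_C_mul_X_pow_le _ _) hk'⟩
    have h2 : (C (lam a b m) * p).natDegree ≤ m :=
      le_trans (natDegree_C_mul_le _ _) (le_of_eq hdeg)
    have h3 : Q.natDegree ≤ m := by
      rw [hQdef]
      exact le_trans (natDegree_add_le _ _) (max_le h1 h2)
    omega
  have E5 : Phi a b (Q * Q) = 0 := by
    have hQsum : Q * Q = ∑ n ∈ Finset.range (m+1), C (Q.coeff n) * (Q * X^n) := by
      nth_rewrite 1 [Q.as_sum_range' (m+1) hQdeg]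
      rw [Finset.sum_mul]
      refine Finset.sum_congr rfl fun n _ => ?_
      rw [← C_mul_X_pow_eq_monomial]; ring
    rw [hQsum, Phi_sum a b ha hb]
    apply Finset.sum_eq_zero
    intro n hn
    rw [Phi_Cmul, E4 n (by have := Finset.mem_range.mp hn; omega)]
    ring
  have hQ0 : Q = 0 := by
    by_contra hQne
    -- turn E5 into a set integral
    have hint : IntervalIntegrable (fun s => (Q*Q).eval s * w a b s) volume (-1) 1 :=
      intPoly a b ha hb (Q*Q)
    have hIoc : IntegrableOn (fun s => (Q*Q).eval s * w a b s) (Ioc (-1:ℝ) 1) :=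
      (intervalIntegrable_iff_integrableOn_Ioc_of_le (by norm_num)).mp hint
    have hzero : ∫ s in Ioc (-1:ℝ) 1, (Q*Q).eval s * w a b s = 0 := by
      have := E5
      unfold Phi at this
      rwa [intervalIntegral.integral_of_le (by norm_num : (-1:ℝ) ≤ 1)] at this
    have hnonneg : (0 : ℝ → ℝ) ≤ᵐ[volume.restrict (Ioc (-1:ℝ) 1)]
        fun s => (Q*Q).eval s * w a b s := by
      rw [Filter.EventuallyLE, ae_restrict_iff' measurableSet_Ioc]
      filter_upwards with s hs
      have : 0 ≤ w a b s := w_nonneg a b s (abs_le.mpr ⟨hs.1.le, hs.2⟩)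
      simp only [Pi.zero_apply, eval_mul]
      nlinarith [sq_nonneg (Q.eval s), this, sq_abs (Q.eval s)]
    have hae := (MeasureTheory.integral_eq_zero_iff_of_nonneg_ae hnonneg hIoc).mp hzero
    rw [Filter.EventuallyEq, ae_restrict_iff' measurableSet_Ioc] at hae
    simp only [Pi.zero_apply] at hae
    rw [Filter.Eventually, mem_ae_iff, Set.compl_setOf] at hae
    have hroots : {x : ℝ | Q.IsRoot x}.Finite := finite_setOf_isRoot hQne
    have hsub : Ioo (0:ℝ) 1 ⊆
        {s : ℝ | ¬(s ∈ Ioc (-1:ℝ) 1 → (Q*Q).eval s * w a b s = 0)}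
          ∪ {x : ℝ | Q.IsRoot x} := by
      intro s hs
      rcases eq_or_ne (Q.eval s) 0 with h0 | h0
      · exact Or.inr h0
      · left
        simp only [mem_setOf_eq, Classical.not_imp]
        refine ⟨⟨by linarith [hs.1], hs.2.le⟩, ?_⟩
        have hw : 0 < w a b s := w_pos a b s
          (by rw [abs_of_pos hs.1]; exact hs.2) (ne_of_gt hs.1)
        rw [eval_mul]
        positivity
    have hnull : volume (Ioo (0:ℝ) 1) = 0 := by
      apply measure_mono_null hsub
      exact measure_union_null hae (hroots.measure_zero _)
    rw [Real.volume_Ioo] at hnull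
    norm_num at hnull
  -- pointwise conclusion
  have e0 : p.eval t = ∑ k ∈ Finset.range (m+1), p.coeff k * t^k := by
    conv_lhs => rw [hP]
    rw [eval_finset_sum]
    exact Finset.sum_congr rfl fun k _ => by simp
  have e0' : p.eval (-t) = ∑ k ∈ Finset.range (m+1), p.coeff k * (-t)^k := by
    conv_lhs => rw [hP]
    rw [eval_finset_sum]
    exact Finset.sum_congr rfl fun k _ => by simp
  have hd1 : p.derivative = ∑ k ∈ Finset.range (m+1), C (p.coeff k * k) * X^(k-1) := by
    conv_lhs => rw [hP]
    rw [derivative_sum]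
    exact Finset.sum_congr rfl fun k _ => by rw [derivative_C_mul_X_pow]
  have e1 : p.derivative.eval t
      = ∑ k ∈ Finset.range (m+1), p.coeff k * k * t^(k-1) := by
    rw [hd1, eval_finset_sum]
    exact Finset.sum_congr rfl fun k _ => by simp
  have e2 : p.derivative.derivative.eval t
      = ∑ k ∈ Finset.range (m+1), p.coeff k * k * ((k-1 : ℕ) : ℝ) * t^(k-1-1) := by
    rw [hd1, derivative_sum, eval_finset_sum]
    refine Finset.sum_congr rfl fun k _ => ?_
    rw [derivative_C_mul_X_pow]
    simp [mul_assoc]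
  have hTeval : Tp.eval t + lam a b m * p.eval t = 0 := by
    have : Tp + C (lam a b m) * p = 0 := hQ0
    have h := congrArg (eval t) this
    simpa using h
  have hEval : (1 - t ^ 2) * p.derivative.derivative.eval t
        - (2 * a + 2 * b + 1) * t * p.derivative.eval t
        + (2 * b / t) * (p.derivative.eval t - (p.eval t - p.eval (-t)) / (2 * t))
      = Tp.eval t := by
    rw [e0, e0', e1, e2, hTp, eval_finset_sum]
    simp only [Finset.mul_sum, ← Finset.sum_sub_distrib, Finset.sum_div, ← Finset.sum_add_distrib]
    refine Finset.sum_congr rfl fun k _ => ?_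
    simp only [eval_mul, eval_sub, eval_C, eval_pow, eval_X]
    match k with
    | 0 => simp [Acoef_zero, lam]
    | 1 =>
      rw [Acoef_one]
      simp only [Nat.cast_one, pow_one, pow_zero, Nat.sub_self]
      unfold GG.lam
      field_simp
      ring
    | (k+2) =>
      rw [show k+2-1 = k+1 by omega, show k+1-1 = k by omega, show k+2-2 = k by omega]
      rcases Nat.even_or_odd k with he | ho
      · have hek : Even (k+2) := by
          obtain ⟨j, hj⟩ := he; exact ⟨j+1, by omega⟩
        rw [hek.neg_pow]
        unfold GG.Acoef GG.lam
        rw [if_pos hek]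
        push_cast
        field_simp
        ring
      · have hok : Odd (k+2) := by
          obtain ⟨j, hj⟩ := ho; exact ⟨j+1, by omega⟩
        rw [hok.neg_pow]
        unfold GG.Acoef GG.lam
        rw [if_neg (Nat.not_even_iff_odd.mpr hok)]
        push_cast
        field_simp
        ring
  have hlam : (m : ℝ) * ((m : ℝ) + 2 * a + 2 * b) = lam a b m := rfl
  rw [hlam]
  linear_combination hEval + hTeval
end
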